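/- Let v > 0, a > 0 and D > 0, and let Φ : ℝ → ℝ be given by Φ(ξ) = D·exp(a·ξ). Then Φ satisfies the linearized traveling-wave equation Φ(ξ − v) = ∫_{−∞}^{ξ} Φ(η) dη for all ξ ∈ ℝ if and only if a·exp(−a·v) = 1. -/

import Mathlib

open MeasureTheory Real Set

lemma integrableOn_exp_mul_Iic' (a ξ : ℝ) (ha : 0 < a) :
    IntegrableOn (fun η => Real.exp (a * η)) (Iic ξ) := by
  rw [← integrable_indicator_iff measurableSet_Iic]
  have h : (Iic ξ).indicator (fun η => Real.exp (a * η)) =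
      fun η => (Iic (a * ξ)).indicator Real.exp (a * η) := by
    funext η
    by_cases hη : η ≤ ξ
    · have h1 : η ∈ Iic ξ := hη
      have h2 : a * η ∈ Iic (a * ξ) := mul_le_mul_of_nonneg_left hη ha.le
      rw [indicator_of_mem h1, indicator_of_mem h2]
    · have h1 : η ∉ Iic ξ := hη
      have h2 : a * η ∉ Iic (a * ξ) := fun h => hη (le_of_mul_le_mul_left h ha)
      rw [indicator_of_notMem h1, indicator_of_notMem h2]
  rw [h]
  exact ((integrable_indicator_iff measurableSet_Iic).2
    (integrableOn_exp_Iic (a * ξ))).comp_mul_left' ha.ne'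

lemma integral_exp_mul_Iic' (a D ξ : ℝ) (ha : 0 < a) :
    ∫ η in Iic ξ, D * Real.exp (a * η) = D / a * Real.exp (a * ξ) := by
  have hderiv : ∀ x ∈ Iic ξ, HasDerivAt (fun x => D / a * Real.exp (a * x))
      (D * Real.exp (a * x)) x := by
    intro x _
    have := ((Real.hasDerivAt_exp (a * x)).comp x
      ((hasDerivAt_id x).const_mul a)).const_mul (D / a)
    have h2 : D / a * (Real.exp (a * x) * a) = D * Real.exp (a * x) := by
      field_simp
    simpa [h2] using this
  have hint : IntegrableOn (fun x => D * Real.exp (a * x)) (Iic ξ) :=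
    (integrableOn_exp_mul_Iic' a ξ ha).const_mul D
  have htend : Filter.Tendsto (fun x => D / a * Real.exp (a * x)) Filter.atBot (nhds 0) := by
    have h1 : Filter.Tendsto (fun x : ℝ => a * x) Filter.atBot Filter.atBot :=
      Filter.tendsto_id.const_mul_atBot ha
    have : Filter.Tendsto (fun x => Real.exp (a * x)) Filter.atBot (nhds 0) :=
      Real.tendsto_exp_atBot.comp h1
    simpa using this.const_mul (D / a)
  simpa using integral_Iic_of_hasDerivAt_of_tendsto' hderiv hint htend

theorem exponential_ansatz_iff_dispersion (v a D : ℝ) (hv : 0 < v) (ha : 0 < a)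
    (hD : 0 < D) :
    (∀ ξ : ℝ, D * Real.exp (a * (ξ - v)) = ∫ η in Set.Iic ξ, D * Real.exp (a * η)) ↔
      a * Real.exp (-a * v) = 1 := by
  have key : ∀ ξ : ℝ, D * Real.exp (a * (ξ - v)) =
      a * Real.exp (-a * v) * (D / a * Real.exp (a * ξ)) := by
    intro ξ
    rw [mul_sub, Real.exp_sub, neg_mul, Real.exp_neg]
    field_simp
  constructor
  · intro h
    have h0 := h 0
    rw [integral_exp_mul_Iic' a D 0 ha, key 0] at h0
    have hx : (0:ℝ) < D / a * Real.exp (a * 0) :=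
      mul_pos (div_pos hD ha) (Real.exp_pos _)
    have : a * Real.exp (-a * v) * (D / a * Real.exp (a * 0)) =
        1 * (D / a * Real.exp (a * 0)) := by rw [h0, one_mul]
    exact mul_right_cancel₀ hx.ne' this
  · intro h ξ
    rw [integral_exp_mul_Iic' a D ξ ha, key ξ, h, one_mul]
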